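/- arXiv:1205.2992 — 3 statements merged into one kernel-verified Lean document; each statement's English description precedes it below -/
import Mathlib

section
/- For every q = (x_0, …, x_k) ∈ C^k(m), let T_q = { v ∈ (ℝ^{m+1})^{k+1} : ⟨N_i(q), v⟩ = 0 for all 0 ≤ i ≤ k−1 }, let H_k be the subspace of tuples supported in the k-th component, and let E_k(q) = span{Z_0(q), …, Z_{k−1}(q)} + H_k. Then the intersection D_k(q) := T_q ∩ E_k(q) equals the span of the m+1 vectors v_r(q) = (x_k^r − x_{k−1}^r)·Y_k(q) + e_r^{(k)} (r = 1, …, m+1); these vectors are linearly independent, so D_k(q) has dimension m+1 at every q ∈ C^k(m). -/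
noncomputable section

open scoped RealInnerProductSpace

namespace ArticulatedArm

/-- `ℝ^{m+1}` with the Euclidean structure. -/
abbrev Vec (m : ℕ) : Type := EuclideanSpace ℝ (Fin (m + 1))

/-- `(ℝ^{m+1})^{k+1}` with the Euclidean (product) structure. -/
abbrev Tup (m k : ℕ) : Type := PiLp 2 (fun _ : Fin (k + 1) => Vec m)

open Fin.NatCast in
/-- The segment vector `x_{i+1} - x_i`. -/
def seg (m k : ℕ) (x : Tup m k) (i : ℕ) : Vec m :=
  x ((i + 1 : ℕ) : Fin (k + 1)) - x ((i : ℕ) : Fin (k + 1))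

/-- The configuration space `C^k(m)`. -/
def Conf (m k : ℕ) : Set (Tup m k) := {x | ∀ i, i < k → ‖seg m k x i‖ = 1}

/-- `A_{i,j}(x) = ⟨x_{i+1} - x_i, x_{j+1} - x_j⟩`. -/
def AA (m k : ℕ) (x : Tup m k) (i j : ℕ) : ℝ := ⟪seg m k x i, seg m k x j⟫

/-- `A_i(x) = A_{i,i-1}(x)`. -/
def Acoef (m k : ℕ) (x : Tup m k) (i : ℕ) : ℝ := AA m k x i (i - 1)

/-- `Z_i(x)`: the tuple whose `i`-th component is `x_{i+1} - x_i` and the others `0`. -/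
def Zt (m k : ℕ) (x : Tup m k) (i : ℕ) : Tup m k :=
  WithLp.toLp 2 (fun l => if (l : ℕ) = i then seg m k x i else 0)

/-- `N_i(x)`: the tuple with `i`-th component `-(x_{i+1} - x_i)`, `(i+1)`-th component
`x_{i+1} - x_i`, and the others `0`. -/
def Nt (m k : ℕ) (x : Tup m k) (i : ℕ) : Tup m k :=
  WithLp.toLp 2 (fun l => if (l : ℕ) = i then -(seg m k x i)
    else if (l : ℕ) = i + 1 then seg m k x i else 0)

/-- `Y_n(x) = Σ_{i=0}^{n-1} (Π_{j=i+1}^{n-1} A_j(x)) Z_i(x)`. -/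
def Yt (m k : ℕ) (x : Tup m k) (n : ℕ) : Tup m k :=
  ∑ i ∈ Finset.range n, (∏ j ∈ Finset.Ico (i + 1) n, Acoef m k x j) • Zt m k x i

/-- `Ψ_i(x) = ‖x_{i+1} - x_i‖² - 1`. -/
def Psi (m k : ℕ) (i : ℕ) (x : Tup m k) : ℝ := ‖seg m k x i‖ ^ 2 - 1

/-- `e_r^{(i)}`: the tuple whose `i`-th component is the `r`-th standard basis
vector of `ℝ^{m+1}` and whose other components are `0`. -/
def et (m k : ℕ) (i : ℕ) (r : Fin (m + 1)) : Tup m k :=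
  WithLp.toLp 2 (fun l => if (l : ℕ) = i then EuclideanSpace.single r (1 : ℝ) else 0)

-- AUX
variable {m k : ℕ}

open Fin.NatCast

def sgl (m k : ℕ) (p : Fin (k + 1)) (u : Vec m) : Tup m k :=
  WithLp.toLp 2 (fun l => if l = p then u else 0)

lemma sgl_apply (p : Fin (k + 1)) (u : Vec m) (l : Fin (k + 1)) :
    sgl m k p u l = if l = p then u else 0 := rfl

lemma inner_sgl_left (p : Fin (k + 1)) (u : Vec m) (v : Tup m k) :
    ⟪sgl m k p u, v⟫ = ⟪u, v p⟫ := by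
  rw [PiLp.inner_apply]
  have h : ∀ l : Fin (k + 1), ⟪sgl m k p u l, v l⟫ = if p = l then ⟪u, v l⟫ else 0 := by
    intro l; rw [sgl_apply]
    by_cases h : l = p
    · subst h; rw [if_pos rfl, if_pos rfl]
    · rw [if_neg h, if_neg fun e => h e.symm, inner_zero_left]
  rw [Finset.sum_congr rfl fun l _ => h l, Finset.sum_ite_eq]
  simp

lemma Nt_eq (q : Tup m k) (i : ℕ) (hi : i < k) :
    Nt m k q i = sgl m k ((i : ℕ) : Fin (k + 1)) (-(seg m k q i))
      + sgl m k (((i + 1 : ℕ)) : Fin (k + 1)) (seg m k q i) := by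
  have h1 : (((i : ℕ) : Fin (k + 1)) : ℕ) = i := Fin.val_cast_of_lt (by omega)
  have h2 : (((i + 1 : ℕ) : Fin (k + 1)) : ℕ) = i + 1 := Fin.val_cast_of_lt (by omega)
  refine PiLp.ext fun l => ?_
  rw [Nt]
  show _ = sgl m k _ _ l + sgl m k _ _ l
  rw [sgl_apply, sgl_apply]
  simp only [PiLp.toLp_apply, Fin.ext_iff, h1, h2]
  split_ifs <;> simp_all <;> omega

lemma inner_Nt (q : Tup m k) (v : Tup m k) (i : ℕ) (hi : i < k) :
    ⟪Nt m k q i, v⟫ = ⟪seg m k q i, v (((i + 1 : ℕ)) : Fin (k + 1))⟫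
      - ⟪seg m k q i, v ((i : ℕ) : Fin (k + 1))⟫ := by
  rw [Nt_eq q i hi, inner_add_left, inner_sgl_left, inner_sgl_left, inner_neg_left]; ring

lemma Yt_apply (q : Tup m k) (l : Fin (k + 1)) :
    Yt m k q k l = if (l : ℕ) < k then
      (∏ j ∈ Finset.Ico ((l : ℕ) + 1) k, Acoef m k q j) • seg m k q (l : ℕ) else 0 := by
  rw [Yt]
  rw [WithLp.ofLp_sum, Finset.sum_apply]
  have h : ∀ i ∈ Finset.range k, ((∏ j ∈ Finset.Ico (i + 1) k, Acoef m k q j) • Zt m k q i) l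
      = if (l : ℕ) = i then (∏ j ∈ Finset.Ico (i + 1) k, Acoef m k q j) • seg m k q i else 0 := by
    intro i _
    rw [PiLp.smul_apply, Zt]
    by_cases h : (l : ℕ) = i <;> simp [h]
  rw [Finset.sum_congr rfl h, Finset.sum_ite_eq]
  simp [Finset.mem_range]

def Phi (m k : ℕ) (q : Tup m k) (w : Vec m) : Tup m k :=
  ⟪seg m k q (k - 1), w⟫ • Yt m k q k + sgl m k ((k : ℕ) : Fin (k + 1)) w

lemma Phi_apply_lt (q : Tup m k) (w : Vec m) (l : Fin (k + 1)) (h : (l : ℕ) < k) :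
    Phi m k q w l = (⟪seg m k q (k - 1), w⟫ *
      ∏ j ∈ Finset.Ico ((l : ℕ) + 1) k, Acoef m k q j) • seg m k q (l : ℕ) := by
  have hn : ¬ (l = ((k : ℕ) : Fin (k + 1))) := by
    rw [Fin.ext_iff, Fin.val_cast_of_lt (Nat.lt_succ_self k)]; omega
  rw [Phi, PiLp.add_apply, PiLp.smul_apply, Yt_apply, sgl_apply,
    if_pos h, if_neg hn, smul_smul, add_zero]

lemma Phi_apply_k (q : Tup m k) (w : Vec m) :
    Phi m k q w (((k : ℕ)) : Fin (k + 1)) = w := by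
  have hv : (((k : ℕ) : Fin (k + 1)) : ℕ) = k := Fin.val_cast_of_lt (Nat.lt_succ_self k)
  rw [Phi, PiLp.add_apply, PiLp.smul_apply, Yt_apply, sgl_apply,
    if_neg (by rw [hv]; omega), if_pos rfl, smul_zero, zero_add]


lemma inner_seg_self (q : Tup m k) (hq : q ∈ Conf m k) (i : ℕ) (hi : i < k) :
    ⟪seg m k q i, seg m k q i⟫ = 1 := by
  rw [real_inner_self_eq_norm_sq, hq i hi]; norm_num

lemma inner_seg_succ (q : Tup m k) (i : ℕ) :
    ⟪seg m k q i, seg m k q (i + 1)⟫ = Acoef m k q (i + 1) := by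
  rw [Acoef, AA, Nat.add_sub_cancel]; exact real_inner_comm _ _

lemma Phi_mem_T (q : Tup m k) (hq : q ∈ Conf m k) (w : Vec m) (i : ℕ) (hi : i < k) :
    ⟪Nt m k q i, Phi m k q w⟫ = 0 := by
  rw [inner_Nt q _ i hi]
  have c2 : (((i : ℕ) : Fin (k + 1)) : ℕ) = i := Fin.val_cast_of_lt (by omega)
  by_cases h : i + 1 < k
  · have c1 : (((i + 1 : ℕ) : Fin (k + 1)) : ℕ) = i + 1 := Fin.val_cast_of_lt (by omega)
    rw [Phi_apply_lt _ _ _ (by rw [c1]; exact h), Phi_apply_lt _ _ _ (by rw [c2]; omega),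
      c1, c2, real_inner_smul_right, real_inner_smul_right, inner_seg_succ,
      inner_seg_self q hq i hi,
      Finset.prod_eq_prod_Ico_succ_bot h (fun j => Acoef m k q j)]
    ring
  · have hi1 : i + 1 = k := by omega
    have hik : k - 1 = i := by omega
    rw [hi1, Phi_apply_k, Phi_apply_lt _ _ _ (by rw [c2]; omega), c2,
      real_inner_smul_right, inner_seg_self q hq i hi, hi1, Finset.Ico_self,
      Finset.prod_empty, hik]
    ring

def Tsub (m k : ℕ) (q : Tup m k) : Submodule ℝ (Tup m k) where
  carrier := {v | ∀ i, i < k → ⟪Nt m k q i, v⟫ = 0}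
  add_mem' := by
    intro a b ha hb i hi
    rw [inner_add_right, ha i hi, hb i hi, add_zero]
  zero_mem' := by intro i hi; exact inner_zero_right _
  smul_mem' := by
    intro c a ha i hi
    rw [real_inner_smul_right, ha i hi, mul_zero]

def Ssub (m k : ℕ) (q : Tup m k) : Submodule ℝ (Tup m k) where
  carrier := {v | ∀ l : Fin (k + 1), (l : ℕ) < k → ∃ c : ℝ, v l = c • seg m k q (l : ℕ)}
  add_mem' := by
    intro a b ha hb l hl
    obtain ⟨c, hc⟩ := ha l hl; obtain ⟨d, hd⟩ := hb l hl
    exact ⟨c + d, by rw [PiLp.add_apply, hc, hd, add_smul]⟩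
  zero_mem' := by intro l hl; exact ⟨0, by simp⟩
  smul_mem' := by
    intro c a ha l hl
    obtain ⟨d, hd⟩ := ha l hl
    exact ⟨c * d, by rw [PiLp.smul_apply, hd, smul_smul]⟩

lemma single_sum (w : Vec m) :
    ∑ r : Fin (m + 1), w r • EuclideanSpace.single r (1 : ℝ) = w := by
  refine PiLp.ext fun s => ?_
  rw [WithLp.ofLp_sum, Finset.sum_apply]
  have h : ∀ r : Fin (m + 1), (w r • EuclideanSpace.single r (1 : ℝ)) s
      = if s = r then w r else 0 := by
    intro r
    rw [PiLp.smul_apply, EuclideanSpace.single_apply]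
    by_cases h : s = r <;> simp [h]
  rw [Finset.sum_congr rfl fun r _ => h r, Finset.sum_ite_eq]
  simp

lemma inner_euc (x w : Vec m) : ⟪x, w⟫ = ∑ r : Fin (m + 1), w r * x r := by
  rw [PiLp.inner_apply]
  exact Finset.sum_congr rfl fun r _ => by
    simp [RCLike.inner_apply, mul_comm]

lemma et_eq_sgl (r : Fin (m + 1)) :
    et m k k r = sgl m k ((k : ℕ) : Fin (k + 1)) (EuclideanSpace.single r (1 : ℝ)) := by
  have hv : (((k : ℕ) : Fin (k + 1)) : ℕ) = k := Fin.val_cast_of_lt (Nat.lt_succ_self k)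
  refine PiLp.ext fun l => ?_
  rw [et, sgl_apply]
  simp only [PiLp.toLp_apply, Fin.ext_iff, hv]

lemma sum_smul_vr (q : Tup m k) (w : Vec m) :
    ∑ r : Fin (m + 1), w r • ((seg m k q (k - 1) r) • Yt m k q k + et m k k r)
      = Phi m k q w := by
  have h : ∀ r : Fin (m + 1), w r • ((seg m k q (k - 1) r) • Yt m k q k + et m k k r)
      = (w r * seg m k q (k - 1) r) • Yt m k q k
        + w r • sgl m k ((k : ℕ) : Fin (k + 1)) (EuclideanSpace.single r (1 : ℝ)) := by
    intro r; rw [smul_add, smul_smul, et_eq_sgl]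
  rw [Finset.sum_congr rfl fun r _ => h r, Finset.sum_add_distrib, ← Finset.sum_smul, Phi,
    inner_euc]
  congr 1
  have hsgl : ∀ r : Fin (m + 1), w r • sgl m k ((k : ℕ) : Fin (k + 1)) (EuclideanSpace.single r (1 : ℝ))
      = sgl m k ((k : ℕ) : Fin (k + 1)) (w r • EuclideanSpace.single r (1 : ℝ)) := by
    intro r; refine PiLp.ext fun l => ?_; rw [PiLp.smul_apply, sgl_apply, sgl_apply]
    by_cases h : l = ((k : ℕ) : Fin (k + 1)) <;> simp [h]
  rw [Finset.sum_congr rfl fun r _ => hsgl r]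
  refine PiLp.ext fun l => ?_
  rw [WithLp.ofLp_sum, Finset.sum_apply, sgl_apply]
  by_cases h : l = ((k : ℕ) : Fin (k + 1))
  · rw [if_pos h]
    have h2 : ∀ r : Fin (m + 1),
        sgl m k ((k : ℕ) : Fin (k + 1)) (w r • EuclideanSpace.single r (1 : ℝ)) l
          = w r • EuclideanSpace.single r (1 : ℝ) := fun r => by rw [sgl_apply, if_pos h]
    rw [Finset.sum_congr rfl fun r _ => h2 r, single_sum]
  · rw [if_neg h]
    exact Finset.sum_eq_zero fun r _ => by rw [sgl_apply, if_neg h]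


def evalk (m k : ℕ) : Tup m k →ₗ[ℝ] Vec m where
  toFun v := v ((k : ℕ) : Fin (k + 1))
  map_add' _ _ := rfl
  map_smul' _ _ := rfl

lemma mem_eq_Phi (q : Tup m k) (hq : q ∈ Conf m k) (hk : 1 ≤ k) (v : Tup m k)
    (hT : ∀ i, i < k → ⟪Nt m k q i, v⟫ = 0)
    (hS : ∀ l : Fin (k + 1), (l : ℕ) < k → ∃ c : ℝ, v l = c • seg m k q (l : ℕ)) :
    v = Phi m k q (v ((k : ℕ) : Fin (k + 1))) := by
  set c : ℝ := ⟪seg m k q (k - 1), v ((k : ℕ) : Fin (k + 1))⟫ with hc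
  set cf : ℕ → ℝ := fun p => ⟪seg m k q p, v ((p : ℕ) : Fin (k + 1))⟫ with hcf
  have hvl : ∀ p : ℕ, p < k → v ((p : ℕ) : Fin (k + 1)) = cf p • seg m k q p := by
    intro p hp
    obtain ⟨cc, hcc⟩ := hS ((p : ℕ) : Fin (k + 1)) (by rw [Fin.val_cast_of_lt (by omega)]; exact hp)
    rw [Fin.val_cast_of_lt (by omega : p < k + 1)] at hcc
    rw [hcc, hcf]
    simp only []
    rw [hcc, real_inner_smul_right, inner_seg_self q hq p hp, mul_one]
  have hrec : ∀ i, i + 1 < k → cf i = Acoef m k q (i + 1) * cf (i + 1) := by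
    intro i h
    have h0 := hT i (by omega)
    rw [inner_Nt q v i (by omega), hvl (i + 1) h, real_inner_smul_right,
      inner_seg_succ] at h0
    have : cf i = ⟪seg m k q i, v ((i : ℕ) : Fin (k + 1))⟫ := rfl
    rw [this]
    linarith
  have hbase : cf (k - 1) = c := by
    have h0 := hT (k - 1) (by omega)
    have e : k - 1 + 1 = k := by omega
    rw [inner_Nt q v (k - 1) (by omega), e] at h0
    have : cf (k - 1) = ⟪seg m k q (k - 1), v (((k - 1 : ℕ)) : Fin (k + 1))⟫ := rfl
    rw [this, hc]
    linarith
  have hcfp : ∀ d p : ℕ, p + d + 1 = k →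
      cf p = c * ∏ j ∈ Finset.Ico (p + 1) k, Acoef m k q j := by
    intro d
    induction d with
    | zero =>
      intro p hp
      rw [show p + 1 = k by omega, Finset.Ico_self, Finset.prod_empty, mul_one,
        show p = k - 1 by omega, hbase]
    | succ d ih =>
      intro p hp
      have h1 : p + 1 < k := by omega
      rw [hrec p h1, ih (p + 1) (by omega),
        Finset.prod_eq_prod_Ico_succ_bot h1 (fun j => Acoef m k q j)]
      ring
  refine PiLp.ext fun l => ?_
  by_cases hl : (l : ℕ) < k
  · have hcl : l = (((l : ℕ)) : Fin (k + 1)) :=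
      Fin.ext (by rw [Fin.val_cast_of_lt (by omega : (l : ℕ) < k + 1)])
    rw [Phi_apply_lt _ _ _ hl, ← hc]
    calc v l = cf (l : ℕ) • seg m k q (l : ℕ) := by
          conv_lhs => rw [hcl]
          exact hvl _ hl
    _ = (c * ∏ j ∈ Finset.Ico ((l : ℕ) + 1) k, Acoef m k q j) • seg m k q (l : ℕ) := by
        rw [hcfp (k - (l : ℕ) - 1) (l : ℕ) (by omega)]
  · have hlk : l = ((k : ℕ) : Fin (k + 1)) := by
      have := l.isLt
      exact Fin.ext (by rw [Fin.val_cast_of_lt (Nat.lt_succ_self k)]; omega)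
    rw [hlk, Phi_apply_k]


lemma mem_Tsub {q v : Tup m k} :
    v ∈ Tsub m k q ↔ ∀ i, i < k → ⟪Nt m k q i, v⟫ = 0 := Iff.rfl

lemma mem_Ssub {q v : Tup m k} :
    v ∈ Ssub m k q ↔ ∀ l : Fin (k + 1), (l : ℕ) < k → ∃ c : ℝ, v l = c • seg m k q (l : ℕ) :=
  Iff.rfl

/-- at every `q ∈ C^k(m)`, the intersection `D_k(q) = T_q ∩ E_k(q)` equals the
span of the `m+1` vectors `v_r(q) = (x_k^r - x_{k-1}^r)·Y_k(q) + e_r^{(k)}`; these vectors are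
linearly independent, so `D_k(q)` has dimension `m+1`. -/
theorem statement3 (m k : ℕ) (hm : 2 ≤ m) (hk : 1 ≤ k)
    (q : Tup m k) (hq : q ∈ Conf m k) :
    let Tq : Set (Tup m k) := {v | ∀ i, i < k → ⟪Nt m k q i, v⟫ = 0}
    let Hk : Set (Tup m k) := {v | ∀ l : Fin (k + 1), (l : ℕ) ≠ k → v l = 0}
    let Ek : Submodule ℝ (Tup m k) :=
      Submodule.span ℝ ((Set.range fun i : Fin k => Zt m k q (i : ℕ)) ∪ Hk)
    let vr : Fin (m + 1) → Tup m k :=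
      fun r => (seg m k q (k - 1) r) • Yt m k q k + et m k k r
    Tq ∩ (Ek : Set (Tup m k)) = (Submodule.span ℝ (Set.range vr) : Set (Tup m k)) ∧
    LinearIndependent ℝ vr ∧
    Module.finrank ℝ ↥(Submodule.span ℝ (Set.range vr)) = m + 1 := by
  intro Tq Hk Ek vr
  have hvr_phi : ∀ r : Fin (m + 1), vr r = Phi m k q (EuclideanSpace.single r (1 : ℝ)) := by
    intro r
    show (seg m k q (k - 1) r) • Yt m k q k + et m k k r = _
    rw [Phi, et_eq_sgl]
    congr 1
    congr 1
    rw [inner_euc]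
    have h : ∀ r' : Fin (m + 1),
        EuclideanSpace.single r (1 : ℝ) r' * seg m k q (k - 1) r'
          = if r = r' then seg m k q (k - 1) r' else 0 := by
      intro r'
      rw [EuclideanSpace.single_apply]
      by_cases h : r' = r
      · subst h; rw [if_pos rfl, if_pos rfl, one_mul]
      · rw [if_neg h, if_neg fun e => h e.symm, zero_mul]
    rw [Finset.sum_congr rfl fun r' _ => h r', Finset.sum_ite_eq]
    simp
  have hYmem : Yt m k q k ∈ Ek := by
    rw [Yt]
    refine Submodule.sum_mem _ fun i hi => Submodule.smul_mem _ _ ?_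
    exact Submodule.subset_span (Or.inl ⟨⟨i, Finset.mem_range.mp hi⟩, rfl⟩)
  have het : ∀ r, et m k k r ∈ Ek := fun r =>
    Submodule.subset_span (Or.inr (fun l hl => if_neg hl))
  have hvrEk : ∀ r, vr r ∈ Ek := fun r =>
    Submodule.add_mem _ (Submodule.smul_mem _ _ hYmem) (het r)
  have hvrT : ∀ r, vr r ∈ Tsub m k q := by
    intro r
    rw [mem_Tsub, hvr_phi r]
    exact fun i hi => Phi_mem_T q hq _ i hi
  have hspan_le : Submodule.span ℝ (Set.range vr) ≤ Tsub m k q ⊓ Ek :=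
    Submodule.span_le.mpr (by rintro _ ⟨r, rfl⟩; exact ⟨hvrT r, hvrEk r⟩)
  have hEkS : Ek ≤ Ssub m k q := by
    rw [Submodule.span_le]
    rintro x (⟨i, rfl⟩ | hx) <;> rw [SetLike.mem_coe, mem_Ssub]
    · intro l hl
      by_cases h : (l : ℕ) = (i : ℕ)
      · refine ⟨1, ?_⟩
        rw [one_smul]
        show (if (l : ℕ) = (i : ℕ) then seg m k q i else 0) = seg m k q (l : ℕ)
        rw [if_pos h, h]
      · exact ⟨0, by rw [zero_smul]; exact if_neg h⟩
    · intro l hl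
      exact ⟨0, by rw [zero_smul]; exact hx l (by omega)⟩
  have hli : LinearIndependent ℝ vr := by
    have hcomp : (⇑(evalk m k) ∘ vr) = fun r : Fin (m + 1) => EuclideanSpace.single r (1 : ℝ) := by
      funext r
      show vr r ((k : ℕ) : Fin (k + 1)) = _
      rw [hvr_phi r, Phi_apply_k]
    apply LinearIndependent.of_comp (evalk m k)
    rw [hcomp]
    have hb : (fun r : Fin (m + 1) => EuclideanSpace.single r (1 : ℝ))
        = ⇑(EuclideanSpace.basisFun (Fin (m + 1)) ℝ).toBasis := by
      funext r; rw [OrthonormalBasis.coe_toBasis, EuclideanSpace.basisFun_apply]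
    rw [hb]
    exact Module.Basis.linearIndependent _
  refine ⟨?_, hli, by rw [finrank_span_eq_card hli, Fintype.card_fin]⟩
  ext x
  constructor
  · rintro ⟨hxT, hxE⟩
    have hxS := hEkS hxE
    have hx := mem_eq_Phi q hq hk x hxT (mem_Ssub.mp hxS)
    show x ∈ Submodule.span ℝ (Set.range vr)
    rw [hx, ← sum_smul_vr q (x ((k : ℕ) : Fin (k + 1)))]
    exact Submodule.sum_mem _ fun r _ =>
      Submodule.smul_mem _ _ (Submodule.subset_span ⟨r, rfl⟩)
  · intro hx
    have h := hspan_le hx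
    exact ⟨h.1, h.2⟩

end ArticulatedArm
end
end

section
/- The set of Cartan points { q ∈ C^k(m) : A_l(q) ≠ 0 for every l = 1, …, k−1 } is open and dense in C^k(m) (with the subspace topology). Equivalently, the singular set C_S = { q ∈ C^k(m) : A_l(q) = 0 for some 1 ≤ l ≤ k−1 } is closed in C^k(m) and has empty interior in C^k(m). -/
noncomputable section

open scoped RealInnerProductSpace

namespace ArticulatedArm

lemma exists_unit_close {m : ℕ} (s v : Vec m) (hs : ‖s‖ = 1) (hv : ‖v‖ = 1)
    {ε : ℝ} (hε : 0 < ε) : ∃ u : Vec m, ‖u‖ = 1 ∧ ‖u - s‖ ≤ ε ∧ ⟪u, v⟫ ≠ 0 := by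
  rcases eq_or_ne (⟪s, v⟫ : ℝ) 0 with h0 | h0
  · set δ := min (ε / 2) 1 with hδdef
    have hδpos : 0 < δ := lt_min (by linarith) one_pos
    have hδ1 : δ ≤ 1 := min_le_right _ _
    have hδε : δ ≤ ε / 2 := min_le_left _ _
    set w := s + δ • v with hw
    have hwsq : ‖w‖ ^ 2 = 1 + δ ^ 2 := by
      rw [hw, norm_add_sq_real, inner_smul_right, h0, norm_smul]
      simp [hs, hv, abs_of_pos hδpos]
    have hwpos : (0:ℝ) < ‖w‖ := by nlinarith [norm_nonneg w, sq_nonneg δ]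
    have hc1 : 1 ≤ ‖w‖ := by nlinarith [norm_nonneg w, sq_nonneg δ]
    have hcle : ‖w‖ ≤ 1 + δ ^ 2 := by nlinarith [norm_nonneg w, sq_nonneg δ, sq_nonneg (δ^2)]
    refine ⟨‖w‖⁻¹ • w, ?_, ?_, ?_⟩
    · rw [norm_smul, norm_inv, norm_norm, inv_mul_cancel₀ hwpos.ne']
    · have t1 : ‖‖w‖⁻¹ • w - w‖ = ‖w‖ - 1 := by
        rw [show ‖w‖⁻¹ • w - w = (‖w‖⁻¹ - 1) • w by rw [sub_smul, one_smul], norm_smul,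
          Real.norm_eq_abs, abs_of_nonpos (by linarith [inv_le_one_of_one_le₀ hc1]),
          neg_sub, sub_mul, one_mul, inv_mul_cancel₀ hwpos.ne']
      have t2 : ‖w - s‖ = δ := by
        rw [hw]
        simp [norm_smul, abs_of_pos hδpos, hv]
      have := dist_triangle (‖w‖⁻¹ • w) w s
      simp only [dist_eq_norm] at this
      calc ‖‖w‖⁻¹ • w - s‖ ≤ ‖‖w‖⁻¹ • w - w‖ + ‖w - s‖ := this
        _ = (‖w‖ - 1) + δ := by rw [t1, t2]
        _ ≤ δ ^ 2 + δ := by linarith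
        _ ≤ ε := by nlinarith
    · rw [inner_smul_left]
      have : (⟪w, v⟫ : ℝ) = δ := by
        rw [hw, inner_add_left, h0, inner_smul_left, real_inner_self_eq_norm_sq, hv]
        simp
      rw [this]
      simp only [RCLike.conj_to_real]
      positivity
  · exact ⟨s, hs, by simp [hε.le], h0⟩

noncomputable def useq (m k : ℕ) (x : Tup m k) (ε : ℝ) : ℕ → Vec m
  | 0 => seg m k x 0
  | (i + 1) =>
    if h : ‖seg m k x (i + 1)‖ = 1 ∧ ‖useq m k x ε i‖ = 1 ∧ 0 < ε then
      Classical.choose (exists_unit_close (seg m k x (i + 1)) (useq m k x ε i)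
        h.1 h.2.1 h.2.2)
    else useq m k x ε i

lemma useq_norm {m k : ℕ} {x : Tup m k} (hx : x ∈ Conf m k) {ε : ℝ} (hε : 0 < ε) :
    ∀ i, i < k → ‖useq m k x ε i‖ = 1 := by
  intro i
  induction i with
  | zero => intro h; simpa [useq] using hx 0 h
  | succ i ih =>
    intro h
    have h1 : ‖seg m k x (i + 1)‖ = 1 := hx (i + 1) h
    have h2 : ‖useq m k x ε i‖ = 1 := ih (by omega)
    rw [useq, dif_pos ⟨h1, h2, hε⟩]
    exact (Classical.choose_spec (exists_unit_close _ _ h1 h2 hε)).1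

lemma useq_close {m k : ℕ} {x : Tup m k} (hx : x ∈ Conf m k) {ε : ℝ} (hε : 0 < ε) :
    ∀ i, i < k → ‖useq m k x ε i - seg m k x i‖ ≤ ε := by
  intro i hi
  cases i with
  | zero => simp [useq, hε.le]
  | succ i =>
    have h1 : ‖seg m k x (i + 1)‖ = 1 := hx (i + 1) hi
    have h2 : ‖useq m k x ε i‖ = 1 := useq_norm hx hε i (by omega)
    rw [useq, dif_pos ⟨h1, h2, hε⟩]
    exact (Classical.choose_spec (exists_unit_close _ _ h1 h2 hε)).2.1

lemma useq_inner {m k : ℕ} {x : Tup m k} (hx : x ∈ Conf m k) {ε : ℝ} (hε : 0 < ε) :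
    ∀ i, i + 1 < k → ⟪useq m k x ε (i + 1), useq m k x ε i⟫ ≠ 0 := by
  intro i hi
  have h1 : ‖seg m k x (i + 1)‖ = 1 := hx (i + 1) hi
  have h2 : ‖useq m k x ε i‖ = 1 := useq_norm hx hε i (by omega)
  rw [useq, dif_pos ⟨h1, h2, hε⟩]
  exact (Classical.choose_spec (exists_unit_close _ _ h1 h2 hε)).2.2

open Fin.NatCast in
lemma telescope {m k : ℕ} (x : Tup m k) :
    ∀ n, n ≤ k → x ((n : ℕ) : Fin (k + 1)) =
      x ((0 : ℕ) : Fin (k + 1)) + ∑ i ∈ Finset.range n, seg m k x i := by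
  intro n
  induction n with
  | zero => simp
  | succ n ih =>
    intro h
    rw [Finset.sum_range_succ, ← add_assoc, ← ih (by omega)]
    simp [seg]

open Fin.NatCast in
lemma exists_good {m k : ℕ} (hk : 2 ≤ k) (x : Tup m k) (hx : x ∈ Conf m k)
    {r : ℝ} (hr : 0 < r) :
    ∃ y ∈ Conf m k, dist y x < r ∧ ∀ l, 1 ≤ l → l ≤ k - 1 → Acoef m k y l ≠ 0 := by
  set ε : ℝ := r / ((k + 1) ^ 2) with hεdef
  have hε : 0 < ε := by positivity
  set u : ℕ → Vec m := useq m k x ε with hu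
  set y : Tup m k := WithLp.toLp 2 fun l => x ((0 : ℕ) : Fin (k + 1)) + ∑ i ∈ Finset.range (l : ℕ), u i
    with hy
  have hseg : ∀ i, i < k → seg m k y i = u i := by
    intro i hi
    have h1 : (((i + 1 : ℕ) : Fin (k + 1)) : ℕ) = i + 1 := Fin.val_cast_of_lt (by omega)
    have h2 : (((i : ℕ) : Fin (k + 1)) : ℕ) = i := Fin.val_cast_of_lt (by omega)
    show y _ - y _ = u i
    rw [hy]
    simp only [h1, h2, Finset.sum_range_succ]
    abel
  have hyConf : y ∈ Conf m k := by
    intro i hi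
    rw [hseg i hi]
    exact useq_norm hx hε i hi
  refine ⟨y, hyConf, ?_, ?_⟩
  · have coord : ∀ j : Fin (k + 1), dist (y j) (x j) ≤ k * ε := by
      intro j
      have hj : (j : ℕ) ≤ k := by omega
      have hx' : x j = x ((0 : ℕ) : Fin (k + 1)) + ∑ i ∈ Finset.range (j : ℕ), seg m k x i := by
        have := telescope x (j : ℕ) hj
        rwa [Fin.cast_val_eq_self] at this
      have hyj : y j = x ((0 : ℕ) : Fin (k + 1)) + ∑ i ∈ Finset.range (j : ℕ), u i := rfl
      rw [dist_eq_norm, hyj, hx']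
      rw [add_sub_add_left_eq_sub, ← Finset.sum_sub_distrib]
      calc ‖∑ i ∈ Finset.range (j : ℕ), (u i - seg m k x i)‖
          ≤ ∑ i ∈ Finset.range (j : ℕ), ‖u i - seg m k x i‖ := norm_sum_le _ _
        _ ≤ ∑ i ∈ Finset.range (j : ℕ), ε := by
            refine Finset.sum_le_sum fun i hi => ?_
            exact useq_close hx hε i (by simp at hi; omega)
        _ = (j : ℕ) * ε := by rw [Finset.sum_const, Finset.card_range]; ring
        _ ≤ k * ε := by
            have : ((j : ℕ) : ℝ) ≤ (k : ℝ) := by exact_mod_cast hj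
            nlinarith
    have hdist : dist y x ≤ (k + 1) * (k * ε) := by
      rw [PiLp.dist_eq_of_L2]
      have hsum : ∑ j, dist (y j) (x j) ^ 2 ≤ ((k + 1) * (k * ε)) ^ 2 := by
        calc ∑ j : Fin (k + 1), dist (y j) (x j) ^ 2
            ≤ ∑ j : Fin (k + 1), (k * ε) ^ 2 := by
              refine Finset.sum_le_sum fun j _ => ?_
              have := coord j
              nlinarith [dist_nonneg (x := y j) (y := x j)]
          _ = (k + 1) * (k * ε) ^ 2 := by
              rw [Finset.sum_const, Finset.card_univ, Fintype.card_fin]; push_cast; ring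
          _ ≤ ((k + 1) * (k * ε)) ^ 2 := by
              have h1 : (1 : ℝ) ≤ (k : ℝ) + 1 := by linarith [Nat.cast_nonneg (α := ℝ) k]
              nlinarith [mul_nonneg (Nat.cast_nonneg (α := ℝ) k) hε.le]
      calc Real.sqrt (∑ j, dist (y j) (x j) ^ 2) ≤ Real.sqrt (((k + 1) * (k * ε)) ^ 2) :=
            Real.sqrt_le_sqrt hsum
        _ = (k + 1) * (k * ε) := Real.sqrt_sq (by positivity)
    have : ((k : ℝ) + 1) * (k * ε) < r := by
      rw [hεdef]
      rw [show ((k : ℝ) + 1) * (k * (r / (k + 1) ^ 2)) = k * r / (k + 1) by field_simp]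
      rw [div_lt_iff₀ (by positivity)]
      nlinarith
    linarith
  · intro l hl1 hl2
    obtain ⟨j, rfl⟩ : ∃ j, l = j + 1 := ⟨l - 1, by omega⟩
    have hjk : j + 1 < k := by omega
    show AA m k y (j + 1) (j + 1 - 1) ≠ 0
    have : j + 1 - 1 = j := by omega
    rw [this]
    show (⟪seg m k y (j + 1), seg m k y j⟫ : ℝ) ≠ 0
    rw [hseg (j + 1) hjk, hseg j (by omega)]
    exact useq_inner hx hε j hjk

/-- the set of Cartan points is open and dense in `C^k(m)`; equivalently the
singular set `C_S` is closed in `C^k(m)` and has empty interior. -/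
theorem statement7 (m k : ℕ) (hm : 2 ≤ m) (hk : 2 ≤ k) :
    IsOpen {q : ↥(Conf m k) | ∀ l, 1 ≤ l → l ≤ k - 1 → Acoef m k (q : Tup m k) l ≠ 0} ∧
    Dense {q : ↥(Conf m k) | ∀ l, 1 ≤ l → l ≤ k - 1 → Acoef m k (q : Tup m k) l ≠ 0} ∧
    IsClosed {q : ↥(Conf m k) | ∃ l, 1 ≤ l ∧ l ≤ k - 1 ∧ Acoef m k (q : Tup m k) l = 0} ∧
    interior {q : ↥(Conf m k) | ∃ l, 1 ≤ l ∧ l ≤ k - 1 ∧ Acoef m k (q : Tup m k) l = 0}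
      = ∅ := by
  have hcont : ∀ l : ℕ, Continuous fun q : ↥(Conf m k) => Acoef m k (q : Tup m k) l := by
    intro l
    have hsegc : ∀ i : ℕ, Continuous fun x : Tup m k => seg m k x i := by
      intro i
      exact (PiLp.continuous_apply 2 _ _).sub (PiLp.continuous_apply 2 _ _)
    exact ((hsegc l).comp continuous_subtype_val).inner
      ((hsegc (l - 1)).comp continuous_subtype_val)
  have hopen : IsOpen
      {q : ↥(Conf m k) | ∀ l, 1 ≤ l → l ≤ k - 1 → Acoef m k (q : Tup m k) l ≠ 0} := by
    have hEq : {q : ↥(Conf m k) | ∀ l, 1 ≤ l → l ≤ k - 1 → Acoef m k (q : Tup m k) l ≠ 0}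
        = ⋂ l ∈ Finset.Icc 1 (k - 1),
            {q : ↥(Conf m k) | Acoef m k (q : Tup m k) l ≠ 0} := by
      ext q
      simp only [Set.mem_setOf_eq, Set.mem_iInter, Finset.mem_Icc, and_imp]
    rw [hEq]
    refine isOpen_biInter_finset fun l _ => ?_
    exact (isClosed_singleton (x := (0 : ℝ))).preimage (hcont l) |>.isOpen_compl
  have hdense : Dense
      {q : ↥(Conf m k) | ∀ l, 1 ≤ l → l ≤ k - 1 → Acoef m k (q : Tup m k) l ≠ 0} := by
    rw [Metric.dense_iff]
    intro q r hr
    obtain ⟨y, hy, hdist, hgood⟩ := exists_good hk (q : Tup m k) q.2 hr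
    exact ⟨⟨y, hy⟩, by rwa [Metric.mem_ball, Subtype.dist_eq], hgood⟩
  have hcompl : {q : ↥(Conf m k) | ∃ l, 1 ≤ l ∧ l ≤ k - 1 ∧ Acoef m k (q : Tup m k) l = 0}
      = {q : ↥(Conf m k) | ∀ l, 1 ≤ l → l ≤ k - 1 → Acoef m k (q : Tup m k) l ≠ 0}ᶜ := by
    ext q
    simp only [Set.mem_setOf_eq, Set.mem_compl_iff]
    push_neg
    simp only [not_not]
  refine ⟨hopen, hdense, ?_, ?_⟩
  · rw [hcompl]
    exact hopen.isClosed_compl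
  · rw [hcompl, interior_compl, hdense.closure_eq, Set.compl_univ]

end ArticulatedArm
end
end

section
/- Let L be a subset of {2, …, k} of cardinality r. At every point q ∈ C^k(m) satisfying A_{l−1}(q) = 0 for all l ∈ L, the map Φ : (ℝ^{m+1})^{k+1} → ℝ^{k+r} whose components are Ψ_0, …, Ψ_{k−1} together with the functions A_{l−1} for l ∈ L has surjective Fréchet derivative at q. (This expresses that the set C(ω) = { q ∈ C^k(m) : A_{l−1}(q) = 0 for l ∈ L and A_{l−1}(q) ≠ 0 for l ∈ {2,…,k} \ L } is an analytic submanifold of C^k(m) of codimension r.) -/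
noncomputable section

open scoped RealInnerProductSpace

namespace ArticulatedArm

open Fin.NatCast

/-! ### Auxiliary material for Statement 8 -/

/-- The segment map `x ↦ x_{i+1} - x_i` as a continuous linear map. -/
def segL (m k : ℕ) (i : ℕ) : Tup m k →L[ℝ] Vec m :=
  (PiLp.proj (𝕜 := ℝ) 2 (fun _ : Fin (k + 1) => Vec m) ((i + 1 : ℕ) : Fin (k + 1))) -
  (PiLp.proj (𝕜 := ℝ) 2 (fun _ : Fin (k + 1) => Vec m) ((i : ℕ) : Fin (k + 1)))

lemma segL_apply (m k i : ℕ) (v : Tup m k) : segL m k i v = seg m k v i := rfl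

lemma hasFDerivAt_seg (m k i : ℕ) (q : Tup m k) :
    HasFDerivAt (fun x => seg m k x i) (segL m k i) q := (segL m k i).hasFDerivAt

/-- The derivative of `Ψ_i` at `q`. -/
def DPsi (m k : ℕ) (q : Tup m k) (i : ℕ) : Tup m k →L[ℝ] ℝ :=
  (2 : ℝ) • (innerSL ℝ (seg m k q i)).comp (segL m k i)

lemma DPsi_apply (m k : ℕ) (q : Tup m k) (i : ℕ) (v : Tup m k) :
    DPsi m k q i v = 2 * ⟪seg m k q i, seg m k v i⟫ := by
  simp [DPsi, segL_apply]

lemma hasFDerivAt_Psi (m k i : ℕ) (q : Tup m k) :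
    HasFDerivAt (Psi m k i) (DPsi m k q i) q := by
  have h1 : HasFDerivAt (fun x => (⟪seg m k x i, seg m k x i⟫ : ℝ) - 1)
      (((fderivInnerCLM ℝ (seg m k q i, seg m k q i)).comp
        ((segL m k i).prod (segL m k i)))) q :=
    ((hasFDerivAt_seg m k i q).inner ℝ (hasFDerivAt_seg m k i q)).sub_const 1
  have h2 : Psi m k i = fun x => (⟪seg m k x i, seg m k x i⟫ : ℝ) - 1 := by
    funext x
    simp only [Psi, ← real_inner_self_eq_norm_sq]
  rw [h2]
  refine h1.congr_fderiv ?_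
  ext v
  simp only [DPsi, ContinuousLinearMap.coe_smul', Pi.smul_apply,
    ContinuousLinearMap.coe_comp', Function.comp_apply, innerSL_apply_apply, segL_apply,
    fderivInnerCLM_apply, ContinuousLinearMap.prod_apply, smul_eq_mul]
  rw [real_inner_comm (seg m k v i) (seg m k q i)]
  ring

/-- The derivative of `x ↦ A_{i,j}(x)` at `q`. -/
def DAij (m k : ℕ) (q : Tup m k) (i j : ℕ) : Tup m k →L[ℝ] ℝ :=
  (innerSL ℝ (seg m k q j)).comp (segL m k i) + (innerSL ℝ (seg m k q i)).comp (segL m k j)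

lemma DAij_apply (m k : ℕ) (q : Tup m k) (i j : ℕ) (v : Tup m k) :
    DAij m k q i j v = ⟪seg m k q j, seg m k v i⟫ + ⟪seg m k q i, seg m k v j⟫ := by
  simp only [DAij, ContinuousLinearMap.add_apply, ContinuousLinearMap.coe_comp',
    Function.comp_apply, innerSL_apply_apply, segL_apply]

lemma hasFDerivAt_AA (m k i j : ℕ) (q : Tup m k) :
    HasFDerivAt (fun x => AA m k x i j) (DAij m k q i j) q := by
  have h1 : HasFDerivAt (fun x => (⟪seg m k x i, seg m k x j⟫ : ℝ))
      (((fderivInnerCLM ℝ (seg m k q i, seg m k q j)).comp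
        ((segL m k i).prod (segL m k j)))) q :=
    (hasFDerivAt_seg m k i q).inner ℝ (hasFDerivAt_seg m k j q)
  refine HasFDerivAt.congr_fderiv (f := fun x => AA m k x i j) h1 ?_
  ext v
  simp only [DAij_apply, ContinuousLinearMap.coe_comp', Function.comp_apply,
    fderivInnerCLM_apply, ContinuousLinearMap.prod_apply, segL_apply]
  rw [real_inner_comm (seg m k v i) (seg m k q j)]
  ring

/-- Auxiliary correction vectors used in the surjectivity argument. -/
def wAux (m k : ℕ) (q : Tup m k) (L : Finset ℕ) (b : ℕ → ℝ) : ℕ → Vec m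
  | 0 => 0
  | (j + 1) => if (j + 2) ∈ L then
      (b (j + 2) - ⟪seg m k q (j + 1), wAux m k q L b j⟫) • seg m k q j else 0

lemma inner_seg_wAux (m k : ℕ) (q : Tup m k) (L : Finset ℕ) (b : ℕ → ℝ)
    (hA : ∀ l ∈ L, Acoef m k q (l - 1) = 0) (i : ℕ) :
    ⟪seg m k q i, wAux m k q L b i⟫ = 0 := by
  cases i with
  | zero => simp [wAux]
  | succ j =>
    rw [wAux]
    split_ifs with h
    · rw [real_inner_smul_right]
      have := hA (j + 2) h
      have h2 : Acoef m k q (j + 2 - 1) = ⟪seg m k q (j + 1), seg m k q j⟫ := rfl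
      rw [h2] at this
      rw [this, mul_zero]
    · simp

/-- for `L ⊆ {2,…,k}` of cardinality `r`, at every `q ∈ C^k(m)` with
`A_{l-1}(q) = 0` for all `l ∈ L`, the map whose components are `Ψ_0,…,Ψ_{k-1}` together with
the `A_{l-1}`, `l ∈ L`, has surjective Fréchet derivative at `q`. -/
theorem statement8 (m k r : ℕ) (hm : 2 ≤ m) (hk : 2 ≤ k)
    (L : Finset ℕ) (hL : ↑L ⊆ Set.Icc 2 k) (hcard : L.card = r)
    (q : Tup m k) (hq : q ∈ Conf m k) (hA : ∀ l ∈ L, Acoef m k q (l - 1) = 0) :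
    ∃ D : Tup m k →L[ℝ] ((Fin k → ℝ) × (↥L → ℝ)),
      HasFDerivAt (fun x : Tup m k =>
        ((fun i : Fin k => Psi m k (i : ℕ) x),
         (fun l : ↥L => Acoef m k x ((l : ℕ) - 1)))) D q ∧
      Function.Surjective D := by
  classical
  -- range facts for elements of `L`
  have hmemL : ∀ l : ↥L, 2 ≤ (l : ℕ) ∧ (l : ℕ) ≤ k := by
    intro l
    have := hL l.2
    exact ⟨this.1, this.2⟩
  -- the candidate derivative
  set D : Tup m k →L[ℝ] ((Fin k → ℝ) × (↥L → ℝ)) :=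
    (ContinuousLinearMap.pi fun i : Fin k => DPsi m k q (i : ℕ)).prod
    (ContinuousLinearMap.pi fun l : ↥L => DAij m k q ((l : ℕ) - 1) ((l : ℕ) - 1 - 1)) with hD
  refine ⟨D, ?_, ?_⟩
  · -- differentiability
    apply HasFDerivAt.prodMk
    · exact hasFDerivAt_pi.2 fun i : Fin k => hasFDerivAt_Psi m k (i : ℕ) q
    · refine hasFDerivAt_pi.2 fun l : ↥L => ?_
      have : (fun x : Tup m k => Acoef m k x ((l : ℕ) - 1)) =
          fun x : Tup m k => AA m k x ((l : ℕ) - 1) ((l : ℕ) - 1 - 1) := rfl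
      rw [this]
      exact hasFDerivAt_AA m k ((l : ℕ) - 1) ((l : ℕ) - 1 - 1) q
  · -- surjectivity
    rintro ⟨a, b⟩
    -- extend the targets to all of ℕ
    set b' : ℕ → ℝ := fun l => if h : l ∈ L then b ⟨l, h⟩ else 0 with hb'
    set w : ℕ → Vec m := wAux m k q L b' with hw
    set u : ℕ → Vec m :=
      fun i => (if h : i < k then (a ⟨i, h⟩ / 2) else 0) • seg m k q i + w i with hu
    set V : Tup m k := WithLp.toLp 2 (fun l => ∑ j ∈ Finset.range (l : ℕ), u j) with hV
    have hsegV : ∀ i, i < k → seg m k V i = u i := by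
      intro i hi
      have h1 : ((((i : ℕ) + 1 : ℕ)) : Fin (k + 1)).val = i + 1 :=
        Fin.val_cast_of_lt (by omega)
      have h2 : (((i : ℕ)) : Fin (k + 1)).val = i := Fin.val_cast_of_lt (by omega)
      show V ((i + 1 : ℕ) : Fin (k + 1)) - V ((i : ℕ) : Fin (k + 1)) = u i
      rw [hV]
      simp only [PiLp.toLp_apply, h1, h2]
      rw [Finset.sum_range_succ]
      abel
    have hself : ∀ i, i < k → (⟪seg m k q i, seg m k q i⟫ : ℝ) = 1 := by
      intro i hi
      rw [real_inner_self_eq_norm_sq, hq i hi, one_pow]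
    have hwi : ∀ i, ⟪seg m k q i, w i⟫ = 0 := inner_seg_wAux m k q L b' hA
    refine ⟨V, ?_⟩
    have hDV : D V = (fun i : Fin k => DPsi m k q (i : ℕ) V,
        fun l : ↥L => DAij m k q ((l : ℕ) - 1) ((l : ℕ) - 1 - 1) V) := rfl
    rw [hDV]
    refine Prod.ext ?_ ?_
    · funext i
      show DPsi m k q (i : ℕ) V = a i
      rw [DPsi_apply, hsegV (i : ℕ) i.isLt, hu]
      simp only [inner_add_right, real_inner_smul_right, hwi, hself (i : ℕ) i.isLt,
        dif_pos i.isLt]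
      rw [Fin.eta]
      ring
    · funext l
      obtain ⟨hl2, hlk⟩ := hmemL l
      obtain ⟨t, ht⟩ : ∃ t, (l : ℕ) = t + 2 := ⟨(l : ℕ) - 2, by omega⟩
      have e1 : (l : ℕ) - 1 = t + 1 := by omega
      have e2 : (l : ℕ) - 1 - 1 = t := by omega
      have htk : t < k := by omega
      have ht1k : t + 1 < k := by omega
      show DAij m k q ((l : ℕ) - 1) ((l : ℕ) - 1 - 1) V = b l
      rw [e1, Nat.add_sub_cancel, DAij_apply, hsegV (t + 1) ht1k, hsegV t htk]
      have hAcoef : (⟪seg m k q (t + 1), seg m k q t⟫ : ℝ) = 0 := by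
        have := hA (l : ℕ) l.2
        rw [ht] at this
        exact this
      have hmem : t + 2 ∈ L := by rw [← ht]; exact l.2
      have hwsucc : w (t + 1) =
          (b' (t + 2) - ⟪seg m k q (t + 1), w t⟫) • seg m k q t := by
        rw [hw, wAux, if_pos hmem]
      have hbt : b' (t + 2) = b l := by
        simp only [hb', dif_pos hmem]
        congr 1
        exact Subtype.ext (by rw [ht])
      have hAcoef2 : (⟪seg m k q t, seg m k q (t + 1)⟫ : ℝ) = 0 := by
        rw [real_inner_comm]; exact hAcoef
      rw [hu]
      simp only [dif_pos ht1k, dif_pos htk, inner_add_right, real_inner_smul_right]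
      rw [hwsucc]
      simp only [real_inner_smul_right, hAcoef, hAcoef2, hself t htk, hbt,
        mul_zero, zero_mul, mul_one, zero_add, add_zero]
      ring
  done

end ArticulatedArm
end
end
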